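/- Let τ, τ_c be in the upper half-plane and k, k_c > 0. Suppose the complex numbers P₁ = (k_c/√(Im τ_c))·(√(Im τ/Im τ_c) + i·(Re τ_c - Re τ)/√(Im τ_c · Im τ)) and P₂ = (k_c/√(Im τ_c))·(Im τ · Re τ_c/Im τ_c + i·(|τ_c|² - Re τ_c·Re τ)/Im τ_c) satisfy P₁ = k/√(Im τ) and P₂ = k·τ/√(Im τ). Then τ = τ_c and k = k_c. -/

import Mathlib

set_option maxHeartbeats 1000000


theorem stmt_16 (τ τc : ℂ) (k kc : ℝ)
    (hτ : 0 < τ.im) (hτc : 0 < τc.im) (hk : 0 < k) (hkc : 0 < kc)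
    (P1 P2 : ℂ)
    (hP1 : P1 = ((kc / Real.sqrt τc.im : ℝ) : ℂ) *
      (((Real.sqrt (τ.im / τc.im) : ℝ) : ℂ) +
        Complex.I * (((τc.re - τ.re) / Real.sqrt (τc.im * τ.im) : ℝ) : ℂ)))
    (hP2 : P2 = ((kc / Real.sqrt τc.im : ℝ) : ℂ) *
      (((τ.im * τc.re / τc.im : ℝ) : ℂ) +
        Complex.I * (((Complex.normSq τc - τc.re * τ.re) / τc.im : ℝ) : ℂ)))
    (h1 : P1 = ((k / Real.sqrt τ.im : ℝ) : ℂ))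
    (h2 : P2 = ((k / Real.sqrt τ.im : ℝ) : ℂ) * τ) :
    τ = τc ∧ k = kc := by
  have hs : 0 < Real.sqrt τ.im := Real.sqrt_pos.2 hτ
  have hsc : 0 < Real.sqrt τc.im := Real.sqrt_pos.2 hτc
  have hs2 : Real.sqrt τ.im ^ 2 = τ.im := Real.sq_sqrt hτ.le
  have hsc2 : Real.sqrt τc.im ^ 2 = τc.im := Real.sq_sqrt hτc.le
  have hprod : Real.sqrt (τc.im * τ.im) = Real.sqrt τc.im * Real.sqrt τ.im :=
    Real.sqrt_mul hτc.le _
  have hdiv : Real.sqrt (τ.im / τc.im) = Real.sqrt τ.im / Real.sqrt τc.im :=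
    Real.sqrt_div hτ.le _
  have E1 := hP1.symm.trans h1
  have E2 := hP2.symm.trans h2
  rw [Complex.ext_iff] at E1 E2
  simp only [Complex.add_re, Complex.add_im, Complex.mul_re, Complex.mul_im,
    Complex.ofReal_re, Complex.ofReal_im, Complex.I_re, Complex.I_im,
    Complex.normSq_apply] at E1 E2
  obtain ⟨e1r, e1i⟩ := E1
  obtain ⟨e2r, e2i⟩ := E2
  rw [hprod, hdiv] at e1r e1i
  set s := Real.sqrt τ.im with hsdef
  set c := Real.sqrt τc.im with hcdef
  have hre : τ.re = τc.re := by
    field_simp at e1i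
    nlinarith [mul_pos hs hsc, hkc]
  have key1 : kc * s ^ 2 = k * c ^ 2 := by
    field_simp at e1r
    nlinarith [e1r, hs2, hsc2]
  have key2 : kc * c ^ 2 * s = k * s ^ 2 * c := by
    rw [hre] at e2i
    field_simp at e2i
    rw [← hs2, ← hsc2] at e2i
    have hc2 : c ^ 2 ≠ 0 := by positivity
    apply mul_left_cancel₀ hc2
    linear_combination e2i
  have hcube : s ^ 3 = c ^ 3 := by
    have h0 : kc ^ 2 * s ^ 3 * (s ^ 3 - c ^ 3) = 0 := by
      linear_combination (kc * s ^ 4 + k * s ^ 2 * c ^ 2 - kc * s * c ^ 3) * key1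
        - (k * c ^ 3) * key2
    have hne : kc ^ 2 * s ^ 3 ≠ 0 := by positivity
    have := (mul_eq_zero.1 h0).resolve_left hne
    linarith
  have hsceq : s = c := by nlinarith [hcube, hs, hsc, mul_pos hs hsc, sq_nonneg (s - c)]
  have him : τ.im = τc.im := by rw [← hs2, ← hsc2, hsceq]
  have hkeq : k = kc := by
    rw [hsceq] at key1
    have : c ^ 2 ≠ 0 := by positivity
    exact (mul_right_cancel₀ this key1.symm)
  exact ⟨Complex.ext hre him, hkeq⟩
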